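/- The twist polynomial of a set system satisfies the four-term relation: for any proper set system D = (E, F) and distinct a, b ∈ E such that D'_ab, D̃_ab and D̃'_ab are proper, ∂ω_D(z) + ∂ω_{D̃'_ab}(z) − ∂ω_{D'_ab}(z) − ∂ω_{D̃_ab}(z) = 0, where D̃_ab, D'_ab and D̃'_ab are obtained from D by handle sliding a over b, by exchanging handle ends of a and b, and by performing both operations, respectively. -/

import Mathlib

open scoped symmDiff

namespace SetSystem

variable {α : Type*} [DecidableEq α]

/-- The family `{F ∪ {a} : F ∪ {b} ∈ 𝓕 and F ⊆ E \ {a,b}}` used in handle sliding. -/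
def slideSet (E : Finset α) (a b : α) (𝓕 : Finset (Finset α)) : Finset (Finset α) :=
  ((E \ {a, b}).powerset.filter (fun X => insert b X ∈ 𝓕)).image (fun X => insert a X)

/-- Handle sliding of `a` over `b`: `𝓕 ∆ {F ∪ {a} : F ∪ {b} ∈ 𝓕, F ⊆ E \ {a,b}}`. -/
def handleSlide (E : Finset α) (a b : α) (𝓕 : Finset (Finset α)) : Finset (Finset α) :=
  𝓕 ∆ slideSet E a b 𝓕

/-- The family `{F ∪ {a,b} : F ∈ 𝓕 and F ⊆ E \ {a,b}}` used in exchanging handle ends. -/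
def exchSet (E : Finset α) (a b : α) (𝓕 : Finset (Finset α)) : Finset (Finset α) :=
  ((E \ {a, b}).powerset.filter (fun X => X ∈ 𝓕)).image (fun X => insert a (insert b X))

/-- Exchanging handle ends of `a` and `b`: `𝓕 ∆ {F ∪ {a,b} : F ∈ 𝓕, F ⊆ E \ {a,b}}`. -/
def exchEnds (E : Finset α) (a b : α) (𝓕 : Finset (Finset α)) : Finset (Finset α) :=
  𝓕 ∆ exchSet E a b 𝓕

/-- The twist of a set system by `A`: feasible sets become `A ∆ X` for `X` feasible. -/
def twist (A : Finset α) (𝓕 : Finset (Finset α)) : Finset (Finset α) :=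
  𝓕.image (fun X => A ∆ X)

/-- `r(D_max)`: size of a largest feasible set. -/
def rmax (𝓕 : Finset (Finset α)) : ℕ := 𝓕.sup Finset.card

/-- `r(D_min)`: size of a smallest feasible set (0 for the empty family). -/
def rmin (𝓕 : Finset (Finset α)) : ℕ := ((𝓕.image Finset.card).min).untopD 0

/-- The width `w(D) = r(D_max) - r(D_min)`. -/
def width (𝓕 : Finset (Finset α)) : ℕ := rmax 𝓕 - rmin 𝓕

/-- The twist polynomial `∂ω_D(z) = Σ_{A ⊆ E} z^{w(D*A)}`. -/
noncomputable def twistPoly (E : Finset α) (𝓕 : Finset (Finset α)) : Polynomial ℤ :=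
  ∑ A ∈ E.powerset, Polynomial.X ^ width (twist A 𝓕)

/-- A (proper) delta-matroid: a nonempty family satisfying the symmetric exchange axiom. -/
def IsDeltaMatroid (𝓕 : Finset (Finset α)) : Prop :=
  𝓕.Nonempty ∧ ∀ X ∈ 𝓕, ∀ Y ∈ 𝓕, ∀ u ∈ X ∆ Y, ∃ v ∈ X ∆ Y, X ∆ ({u, v} : Finset α) ∈ 𝓕

/-- A set system on ground set `E` is binary if some twist of it equals `D(C)` for a
symmetric matrix `C` over `GF(2)` indexed by `E`: the feasible sets of `D(C)` are those
`B ⊆ E` whose principal submatrix `C[B]` is nonsingular (with `C[∅]` nonsingular). -/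
def IsBinary (E : Finset α) (𝓕 : Finset (Finset α)) : Prop :=
  ∃ A ⊆ E, ∃ C : α → α → ZMod 2, (∀ i j, C i j = C j i) ∧
    ∀ B : Finset α, B ∈ twist A 𝓕 ↔
      B ⊆ E ∧ (Matrix.of fun i j : ↥B => C i.1 j.1).det ≠ 0

/-- `e` is a loop: it lies in no feasible set. -/
def IsLoop (𝓕 : Finset (Finset α)) (e : α) : Prop := ∀ X ∈ 𝓕, e ∉ X

/-- `e` is a coloop: it lies in every feasible set. -/
def IsColoop (𝓕 : Finset (Finset α)) (e : α) : Prop := ∀ X ∈ 𝓕, e ∈ X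

/-- Deletion of `e` (acting on the feasible family). -/
def deleteElem (𝓕 : Finset (Finset α)) (e : α) : Finset (Finset α) :=
  if ∀ X ∈ 𝓕, e ∈ X then 𝓕.image (fun X => X.erase e)
  else 𝓕.filter (fun X => e ∉ X)

/-- Contraction of `e`: `D / e = (D * {e}) \ e`. -/
def contractElem (𝓕 : Finset (Finset α)) (e : α) : Finset (Finset α) :=
  deleteElem (twist {e} 𝓕) e



section Aux

variable {α : Type*} [DecidableEq α]

lemma card_symmDiff_insert_of_mem (A X : Finset α) {a : α} (ha : a ∈ A) (haX : a ∉ X) :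
    (A ∆ insert a X).card + 1 = (A ∆ X).card := by
  have h1 : A ∆ insert a X = (A ∆ X).erase a := by
    ext x
    simp only [Finset.mem_symmDiff, Finset.mem_insert, Finset.mem_erase]
    by_cases hx : x = a <;> simp [hx, ha, haX] <;> tauto
  rw [h1]
  exact Finset.card_erase_add_one (Finset.mem_symmDiff.2 (Or.inl ⟨ha, haX⟩))

lemma card_symmDiff_insert_of_not_mem (A X : Finset α) {a : α} (ha : a ∉ A) (haX : a ∉ X) :
    (A ∆ insert a X).card = (A ∆ X).card + 1 := by
  have h1 : A ∆ insert a X = insert a (A ∆ X) := by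
    ext x
    simp only [Finset.mem_symmDiff, Finset.mem_insert]
    by_cases hx : x = a <;> simp [hx, ha, haX] <;> tauto
  have h2 : a ∉ A ∆ X := by
    simp only [Finset.mem_symmDiff]; tauto
  rw [h1, Finset.card_insert_of_notMem h2]

lemma image_card_symmDiff (A : Finset α) (F S : Finset (Finset α))
    (φ : Finset α → Finset α)
    (h : ∀ X ∈ S, φ X ∈ F ∧ φ X ∉ S ∧ (A ∆ φ X).card = (A ∆ X).card) :
    (F ∆ S).image (fun X => (A ∆ X).card) = F.image (fun X => (A ∆ X).card) := by
  ext n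
  simp only [Finset.mem_image, Finset.mem_symmDiff]
  constructor
  · rintro ⟨X, hX | hX, rfl⟩
    · exact ⟨X, hX.1, rfl⟩
    · obtain ⟨h1, _, h3⟩ := h X hX.1
      exact ⟨φ X, h1, h3⟩
  · rintro ⟨X, hX, rfl⟩
    by_cases hXS : X ∈ S
    · obtain ⟨h1, h2, h3⟩ := h X hXS
      exact ⟨φ X, Or.inl ⟨h1, h2⟩, h3⟩
    · exact ⟨X, Or.inl ⟨hX, hXS⟩, rfl⟩

lemma width_eq_of_image_card_eq (F G : Finset (Finset α))
    (h : F.image Finset.card = G.image Finset.card) : width F = width G := by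
  have hmax : rmax F = rmax G := by
    unfold rmax
    rw [show (F.sup Finset.card) = (F.image Finset.card).sup id from
      (Finset.sup_image F Finset.card id).symm,
      show (G.sup Finset.card) = (G.image Finset.card).sup id from
      (Finset.sup_image G Finset.card id).symm, h]
  have hmin : rmin F = rmin G := by unfold rmin; rw [h]
  unfold width
  rw [hmax, hmin]

lemma image_card_twist (A : Finset α) (F : Finset (Finset α)) :
    (twist A F).image Finset.card = F.image (fun X => (A ∆ X).card) := by
  unfold twist
  rw [Finset.image_image]
  rfl

lemma not_mem_of_subset_sdiff {X : Finset α} {E : Finset α} {a b : α}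
    (h : X ⊆ E \ {a, b}) : a ∉ X ∧ b ∉ X := by
  constructor <;> intro hx <;> have := h hx <;> simp [Finset.mem_sdiff] at this

lemma width_twist_handleSlide (E : Finset α) (a b : α) (hab : a ≠ b)
    (F : Finset (Finset α)) (A : Finset α) (hA : a ∈ A ↔ b ∈ A) :
    width (twist A (handleSlide E a b F)) = width (twist A F) := by
  apply width_eq_of_image_card_eq
  rw [image_card_twist, image_card_twist]
  unfold handleSlide
  apply image_card_symmDiff A F (slideSet E a b F) (fun X => insert b (X.erase a))
  intro X hX
  simp only [slideSet, Finset.mem_image, Finset.mem_filter, Finset.mem_powerset] at hX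
  obtain ⟨X₀, ⟨hX₀E, hbF⟩, rfl⟩ := hX
  obtain ⟨haX₀, hbX₀⟩ := not_mem_of_subset_sdiff hX₀E
  have herase : (insert a X₀).erase a = X₀ := Finset.erase_insert haX₀
  rw [herase]
  refine ⟨hbF, ?_, ?_⟩
  · intro hmem
    simp only [slideSet, Finset.mem_image, Finset.mem_filter, Finset.mem_powerset] at hmem
    obtain ⟨Y, _, hY⟩ := hmem
    have : a ∈ insert b X₀ := hY ▸ Finset.mem_insert_self a Y
    simp only [Finset.mem_insert] at this
    exact absurd this (by tauto)
  · by_cases haA : a ∈ A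
    · have hbA : b ∈ A := hA.1 haA
      have c1 := card_symmDiff_insert_of_mem A X₀ hbA hbX₀
      have c2 := card_symmDiff_insert_of_mem A X₀ haA haX₀
      omega
    · have hbA : b ∉ A := fun h => haA (hA.2 h)
      have c1 := card_symmDiff_insert_of_not_mem A X₀ hbA hbX₀
      have c2 := card_symmDiff_insert_of_not_mem A X₀ haA haX₀
      omega

lemma width_twist_exchEnds (E : Finset α) (a b : α) (hab : a ≠ b)
    (F : Finset (Finset α)) (A : Finset α) (hA : ¬ (a ∈ A ↔ b ∈ A)) :
    width (twist A (exchEnds E a b F)) = width (twist A F) := by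
  apply width_eq_of_image_card_eq
  rw [image_card_twist, image_card_twist]
  unfold exchEnds
  apply image_card_symmDiff A F (exchSet E a b F) (fun X => (X.erase a).erase b)
  intro X hX
  simp only [exchSet, Finset.mem_image, Finset.mem_filter, Finset.mem_powerset] at hX
  obtain ⟨X₀, ⟨hX₀E, hX₀F⟩, rfl⟩ := hX
  obtain ⟨haX₀, hbX₀⟩ := not_mem_of_subset_sdiff hX₀E
  have hab' : a ∉ insert b X₀ := by
    simp only [Finset.mem_insert]; tauto
  have herase : ((insert a (insert b X₀)).erase a).erase b = X₀ := by
    rw [Finset.erase_insert hab', Finset.erase_insert hbX₀]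
  rw [herase]
  refine ⟨hX₀F, ?_, ?_⟩
  · intro hmem
    simp only [exchSet, Finset.mem_image, Finset.mem_filter, Finset.mem_powerset] at hmem
    obtain ⟨Y, _, hY⟩ := hmem
    have : a ∈ X₀ := by
      rw [← hY]; exact Finset.mem_insert_self a (insert b Y)
    exact haX₀ this
  · by_cases haA : a ∈ A
    · have hbA : b ∉ A := fun h => hA ⟨fun _ => h, fun _ => haA⟩
      have c1 := card_symmDiff_insert_of_not_mem A X₀ hbA hbX₀
      have c2 := card_symmDiff_insert_of_mem A (insert b X₀) haA hab'
      omega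
    · have hbA : b ∈ A := by
        by_contra hb
        exact hA ⟨fun h => absurd h haA, fun h => absurd h hb⟩
      have c1 := card_symmDiff_insert_of_mem A X₀ hbA hbX₀
      have c2 := card_symmDiff_insert_of_not_mem A (insert b X₀) haA hab'
      omega

lemma slideSet_exchEnds (E : Finset α) (a b : α) (hab : a ≠ b) (F : Finset (Finset α)) :
    slideSet E a b (exchEnds E a b F) = slideSet E a b F := by
  unfold slideSet
  congr 1
  apply Finset.filter_congr
  intro X hX
  simp only [Finset.mem_powerset] at hX
  obtain ⟨haX, hbX⟩ := not_mem_of_subset_sdiff hX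
  have hnot : insert b X ∉ exchSet E a b F := by
    intro hmem
    simp only [exchSet, Finset.mem_image, Finset.mem_filter, Finset.mem_powerset] at hmem
    obtain ⟨Y, _, hY⟩ := hmem
    have : a ∈ insert b X := hY ▸ Finset.mem_insert_self a (insert b Y)
    simp only [Finset.mem_insert] at this
    tauto
  unfold exchEnds
  simp only [Finset.mem_symmDiff]
  tauto

lemma exchSet_handleSlide (E : Finset α) (a b : α) (hab : a ≠ b) (F : Finset (Finset α)) :
    exchSet E a b (handleSlide E a b F) = exchSet E a b F := by
  unfold exchSet
  congr 1
  apply Finset.filter_congr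
  intro X hX
  simp only [Finset.mem_powerset] at hX
  obtain ⟨haX, hbX⟩ := not_mem_of_subset_sdiff hX
  have hnot : X ∉ slideSet E a b F := by
    intro hmem
    simp only [slideSet, Finset.mem_image, Finset.mem_filter, Finset.mem_powerset] at hmem
    obtain ⟨Y, _, hY⟩ := hmem
    exact haX (hY ▸ Finset.mem_insert_self a Y)
  unfold handleSlide
  simp only [Finset.mem_symmDiff]
  tauto

lemma handleSlide_exchEnds_comm (E : Finset α) (a b : α) (hab : a ≠ b)
    (F : Finset (Finset α)) :
    handleSlide E a b (exchEnds E a b F) = exchEnds E a b (handleSlide E a b F) := by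
  unfold handleSlide exchEnds
  rw [show slideSet E a b (F ∆ exchSet E a b F) = slideSet E a b F from
    slideSet_exchEnds E a b hab F,
    show exchSet E a b (F ∆ slideSet E a b F) = exchSet E a b F from
    exchSet_handleSlide E a b hab F]
  exact symmDiff_right_comm F (exchSet E a b F) (slideSet E a b F)

end Aux

/-- The twist polynomial of a set system satisfies the four-term relation. -/
theorem twistPoly_four_term (E : Finset α) (𝓕 : Finset (Finset α))
    (h𝓕 : ∀ X ∈ 𝓕, X ⊆ E) (hprop : 𝓕.Nonempty)
    (a b : α) (ha : a ∈ E) (hb : b ∈ E) (hab : a ≠ b)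
    (hprop₁ : (exchEnds E a b 𝓕).Nonempty)
    (hprop₂ : (handleSlide E a b 𝓕).Nonempty)
    (hprop₃ : (handleSlide E a b (exchEnds E a b 𝓕)).Nonempty) :
    twistPoly E 𝓕 + twistPoly E (handleSlide E a b (exchEnds E a b 𝓕))
      - twistPoly E (exchEnds E a b 𝓕) - twistPoly E (handleSlide E a b 𝓕) = 0 := by
  have key : ∀ A ∈ E.powerset,
      (Polynomial.X : Polynomial ℤ) ^ width (twist A 𝓕)
        + Polynomial.X ^ width (twist A (handleSlide E a b (exchEnds E a b 𝓕)))
      = Polynomial.X ^ width (twist A (exchEnds E a b 𝓕))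
        + Polynomial.X ^ width (twist A (handleSlide E a b 𝓕)) := by
    intro A _
    by_cases hA : (a ∈ A ↔ b ∈ A)
    · rw [width_twist_handleSlide E a b hab 𝓕 A hA,
        width_twist_handleSlide E a b hab (exchEnds E a b 𝓕) A hA]
      ring
    · rw [handleSlide_exchEnds_comm E a b hab 𝓕,
        width_twist_exchEnds E a b hab (handleSlide E a b 𝓕) A hA,
        width_twist_exchEnds E a b hab 𝓕 A hA]
  have h1 : twistPoly E 𝓕 + twistPoly E (handleSlide E a b (exchEnds E a b 𝓕))
      = twistPoly E (exchEnds E a b 𝓕) + twistPoly E (handleSlide E a b 𝓕) := by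
    unfold twistPoly
    rw [← Finset.sum_add_distrib, ← Finset.sum_add_distrib]
    exact Finset.sum_congr rfl key
  linear_combination h1


end SetSystem
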